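/- Let F(x,y) = (h(x), y·e(x)) with λ > 1 as above, and let v = (v₁, v₂) with v₁ > 0 and slope sl(v) = v₂/v₁ > 0. For any (x,y) with y > 0 and x ∈ (0, π/2), the image vector w = DF(x,y)·v = (h′(x)v₁, y·e′(x)v₁ + e(x)v₂) satisfies sl(w) ≥ sl(v)/λ³ > 0, provided y·e′(x) ≥ 0. In particular, positive slope is preserved by the derivative, losing at most a factor λ³ per iteration. -/

import Mathlib

noncomputable def hmap (L x : ℝ) : ℝ := Real.arctan (L ^ 2 * Real.tan x)

noncomputable def emap (L x : ℝ) : ℝ :=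
  Real.sqrt (L⁻¹ ^ 2 * Real.cos x ^ 2 + L ^ 2 * Real.sin x ^ 2)

lemma hmap_hasDerivAt (L x : ℝ) (hc : Real.cos x ≠ 0) :
    HasDerivAt (hmap L)
      (1 / (1 + (L ^ 2 * Real.tan x) ^ 2) * (L ^ 2 * (1 / Real.cos x ^ 2))) x := by
  have h1 := (Real.hasDerivAt_tan hc).const_mul (L ^ 2)
  exact (Real.hasDerivAt_arctan (L ^ 2 * Real.tan x)).comp x h1

/-- For `F(x,y) = (h(x), y e(x))`, `λ > 1`, a vector `v = (v₁,v₂)` with `v₁ > 0`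
and `sl(v) = v₂/v₁ > 0`, a point `(x,y)` with `x ∈ (0, π/2)`, `y > 0` and `y e′(x) ≥ 0`, the
image vector `w = DF(x,y) v = (h′(x)v₁, y e′(x)v₁ + e(x)v₂)` satisfies
`sl(w) ≥ sl(v)/λ³ > 0`. -/
theorem stmt_16 (L : ℝ) (hL : 1 < L) (x y v₁ v₂ : ℝ)
    (hx : x ∈ Set.Ioo (0 : ℝ) (Real.pi / 2)) (hy : 0 < y)
    (hv1 : 0 < v₁) (hsl : 0 < v₂ / v₁)
    (hpos : 0 ≤ y * deriv (emap L) x) :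
    (v₂ / v₁) / L ^ 3 ≤
      (y * deriv (emap L) x * v₁ + emap L x * v₂) / (deriv (hmap L) x * v₁) ∧
    0 < (y * deriv (emap L) x * v₁ + emap L x * v₂) / (deriv (hmap L) x * v₁) := by
  obtain ⟨hx0, hx2⟩ := hx
  have hL0 : (0:ℝ) < L := lt_trans one_pos hL
  have hcos : 0 < Real.cos x := Real.cos_pos_of_mem_Ioo ⟨by linarith [Real.pi_pos], hx2⟩
  have hcne : Real.cos x ≠ 0 := ne_of_gt hcos
  have hv2 : 0 < v₂ := by
    have := mul_pos hsl hv1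
    rwa [div_mul_cancel₀ _ (ne_of_gt hv1)] at this
  have hderiv := (hmap_hasDerivAt L x hcne).deriv
  set D := deriv (hmap L) x with hD
  have hDpos : 0 < D := by
    rw [hderiv]
    positivity
  -- upper bound D ≤ L^2
  have htan : 0 < Real.tan x := Real.tan_pos_of_pos_of_lt_pi_div_two hx0 hx2
  have hsec : 1 / Real.cos x ^ 2 = 1 + Real.tan x ^ 2 := by
    rw [Real.tan_eq_sin_div_cos]
    field_simp
    linarith [Real.sin_sq_add_cos_sq x]
  have hDle : D ≤ L ^ 2 := by
    have hden : 0 < 1 + (L ^ 2 * Real.tan x) ^ 2 := by positivity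
    rw [hderiv, hsec, one_div, inv_mul_le_iff₀ hden]
    have hL2' : 1 < L ^ 2 := by nlinarith
    have hL2 : 1 ≤ (L ^ 2) ^ 2 := by nlinarith
    nlinarith [mul_nonneg (sub_nonneg.mpr hL2) (sq_nonneg (Real.tan x))]
  -- lower bound emap L x ≥ L⁻¹
  have heme : L⁻¹ ≤ emap L x := by
    have h1 : L⁻¹ ^ 2 ≤ L⁻¹ ^ 2 * Real.cos x ^ 2 + L ^ 2 * Real.sin x ^ 2 := by
      have hsin := Real.sin_sq_add_cos_sq x
      have hinv : L⁻¹ ^ 2 ≤ L ^ 2 := by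
        have : L⁻¹ ≤ 1 := by rw [inv_le_one_iff₀]; right; linarith
        have h0 : (0:ℝ) ≤ L⁻¹ := by positivity
        nlinarith
      nlinarith [sq_nonneg (Real.sin x)]
    calc L⁻¹ = Real.sqrt (L⁻¹ ^ 2) := by
          rw [Real.sqrt_sq (by positivity)]
      _ ≤ emap L x := Real.sqrt_le_sqrt h1
  have hipos : (0:ℝ) < L⁻¹ := by positivity
  have hN : L⁻¹ * v₂ ≤ y * deriv (emap L) x * v₁ + emap L x * v₂ := by
    have h1 : L⁻¹ * v₂ ≤ emap L x * v₂ :=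
      mul_le_mul_of_nonneg_right heme (le_of_lt hv2)
    nlinarith
  have hNpos : 0 < y * deriv (emap L) x * v₁ + emap L x * v₂ := by
    have : 0 < L⁻¹ * v₂ := by positivity
    linarith
  have hDv : 0 < D * v₁ := mul_pos hDpos hv1
  constructor
  · have key : (L⁻¹ * v₂) / (L ^ 2 * v₁) ≤
        (y * deriv (emap L) x * v₁ + emap L x * v₂) / (D * v₁) := by
      apply div_le_div₀ (le_of_lt hNpos) hN hDv
      exact mul_le_mul_of_nonneg_right hDle (le_of_lt hv1)
    have heq : (v₂ / v₁) / L ^ 3 = (L⁻¹ * v₂) / (L ^ 2 * v₁) := by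
      field_simp
      try ring
      try exact Or.inl trivial
    rw [heq]; exact key
  · exact div_pos hNpos hDv
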